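/- X has a countable basis (as a continuous poset) if and only if the interval domain IX is ω-continuous. -/
import Mathlib


open Set

/-- `a` is way below `x`. -/
def wayBelow {α : Type*} [Preorder α] (a x : α) : Prop :=
  ∀ S : Set α, S.Nonempty → DirectedOn (· ≤ ·) S → ∀ d, IsLUB S d → x ≤ d →
    ∃ s ∈ S, a ≤ s

/-- A poset is continuous if every element is the supremum of a directed set
of elements way below it. -/
def ContinuousPoset (α : Type*) [Preorder α] : Prop :=
  ∀ x : α, ∃ S : Set α, S ⊆ {a | wayBelow a x} ∧ S.Nonempty ∧
    DirectedOn (· ≤ ·) S ∧ IsLUB S x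

/-- A basis for a continuous poset. -/
def PosetBasis {α : Type*} [Preorder α] (B : Set α) : Prop :=
  ∀ x : α, ∃ S : Set α, S ⊆ B ∩ {a | wayBelow a x} ∧ S.Nonempty ∧
    DirectedOn (· ≤ ·) S ∧ IsLUB S x

/-- Scott open sets: upper sets inaccessible by directed suprema. -/
def ScottOpen {α : Type*} [Preorder α] (U : Set α) : Prop :=
  IsUpperSet U ∧ ∀ S : Set α, S.Nonempty → DirectedOn (· ≤ ·) S → ∀ d, IsLUB S d →
    d ∈ U → (S ∩ U).Nonempty

/-- The Scott topology. -/
def scottTop (α : Type*) [Preorder α] : TopologicalSpace α :=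
  TopologicalSpace.generateFrom {U | ScottOpen U}

/-- A bicontinuous poset. -/
def Bicontinuous (α : Type*) [Preorder α] : Prop :=
  ContinuousPoset α ∧
  (∀ x y : α, wayBelow x y ↔
    ∀ S : Set α, S.Nonempty → DirectedOn (· ≥ ·) S → ∀ i, IsGLB S i → i ≤ x →
      ∃ s ∈ S, s ≤ y) ∧
  (∀ x : α, DirectedOn (· ≥ ·) {y | wayBelow x y} ∧ IsGLB {y | wayBelow x y} x)

/-- The basic open intervals `(a,b) = {x | a ≪ x ≪ b}`. -/
def intervalBasis (α : Type*) [Preorder α] : Set (Set α) :=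
  {s | ∃ a b : α, s = {x | wayBelow a x ∧ wayBelow x b}}

/-- The interval topology, generated by the sets `(a,b)`. -/
def intervalTop (α : Type*) [Preorder α] : TopologicalSpace α :=
  TopologicalSpace.generateFrom (intervalBasis α)

/-- A globally hyperbolic poset: bicontinuous, with compact closed intervals. -/
def GloballyHyperbolic (α : Type*) [PartialOrder α] : Prop :=
  Bicontinuous α ∧ ∀ a b : α, @IsCompact α (intervalTop α) (Set.Icc a b)

/-- The poset of closed intervals `[a,b]`, `a ≤ b`, under reverse inclusion. -/
def IX (α : Type*) [PartialOrder α] := {p : α × α // p.1 ≤ p.2}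

instance IX.instPartialOrder {α : Type*} [PartialOrder α] : PartialOrder (IX α) where
  le x y := x.1.1 ≤ y.1.1 ∧ y.1.2 ≤ x.1.2
  le_refl x := ⟨le_refl _, le_refl _⟩
  le_trans x y z h1 h2 := ⟨h1.1.trans h2.1, h2.2.trans h1.2⟩
  le_antisymm x y h1 h2 :=
    Subtype.ext (Prod.ext_iff.mpr ⟨le_antisymm h1.1 h2.1, le_antisymm h2.2 h1.2⟩)

section Rel

variable {β : Type*}

/-- Directedness with respect to an arbitrary relation. -/
def relDirectedOn (r : β → β → Prop) (S : Set β) : Prop :=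
  ∀ x ∈ S, ∀ y ∈ S, ∃ z ∈ S, r x z ∧ r y z

/-- Least upper bound with respect to an arbitrary relation. -/
def relIsLUB (r : β → β → Prop) (S : Set β) (d : β) : Prop :=
  (∀ s ∈ S, r s d) ∧ ∀ u, (∀ s ∈ S, r s u) → r d u

/-- The way-below relation with respect to an arbitrary relation. -/
def relWayBelow (r : β → β → Prop) (a x : β) : Prop :=
  ∀ S : Set β, S.Nonempty → relDirectedOn r S → ∀ d, relIsLUB r S d → r x d →
    ∃ s ∈ S, r a s

/-- An abstract basis: a transitive relation, interpolative from the `-` direction. -/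
def AbstractBasis (r : β → β → Prop) : Prop :=
  Transitive r ∧ ∀ (F : Finset β) (x : β), (∀ y ∈ F, r y x) →
    ∃ z, (∀ y ∈ F, r y z) ∧ r z x

/-- Interpolation in the `+` direction. -/
def PlusInterpolative (r : β → β → Prop) : Prop :=
  ∀ (F : Finset β) (x : β), (∀ y ∈ F, r x y) → ∃ z, r x z ∧ (∀ y ∈ F, r z y)

/-- An ideal: a nonempty directed lower set. -/
def IsIdeal (r : β → β → Prop) (I : Set β) : Prop :=
  I.Nonempty ∧ (∀ x y, r x y → y ∈ I → x ∈ I) ∧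
    ∀ x ∈ I, ∀ y ∈ I, ∃ z ∈ I, r x z ∧ r y z

/-- The ideal completion: ideals ordered by inclusion. -/
def IdealCompletion (r : β → β → Prop) := {I : Set β // IsIdeal r I}

instance IdealCompletion.instPartialOrder {β : Type*} (r : β → β → Prop) :
    PartialOrder (IdealCompletion r) where
  le I J := I.1 ⊆ J.1
  le_refl I := subset_rfl
  le_trans I J K h1 h2 := Set.Subset.trans h1 h2
  le_antisymm I J h1 h2 := Subtype.ext (Set.Subset.antisymm h1 h2)

end Rel

/-- The order on maximal elements induced by interval endpoints. -/
def maxLe {α : Type*} (left right : α → α) (a b : α) : Prop :=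
  ∃ x, left x = a ∧ right x = b

/-- An interval poset. -/
structure IntervalPoset (α : Type*) [PartialOrder α] where
  left : α → α
  right : α → α
  left_max : ∀ x, IsMax (left x)
  right_max : ∀ x, IsMax (right x)
  glb : ∀ x, IsGLB {left x, right x} x
  glue : ∀ x y, right x = left y →
    ∃ z, IsGLB {x, y} z ∧ left z = left x ∧ right z = right y
  sub_left : ∀ x p, IsMax p → x ≤ p →
    ∃ z, IsGLB {left x, p} z ∧ left z = left x ∧ right z = p
  sub_right : ∀ x p, IsMax p → x ≤ p →
    ∃ z, IsGLB {p, right x} z ∧ left z = p ∧ right z = right x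

/-- An interval domain. -/
structure IntervalDomain (α : Type*) [PartialOrder α] extends IntervalPoset α where
  dcpo : ∀ S : Set α, S.Nonempty → DirectedOn (· ≤ ·) S → ∃ d, IsLUB S d
  cont : ContinuousPoset α
  ax1 : ∀ x p, IsMax p → wayBelow x p →
    (∀ z, IsGLB {left x, p} z → ∃ u, wayBelow z u) ∧
    (∀ z, IsGLB {p, right x} z → ∃ u, wayBelow z u)
  ax2b : ∀ x : α, (∃ u, wayBelow x u) ↔
    (∀ y, left y = left x → y ≤ x →
      relWayBelow (fun u v => u ≤ v ∧ right u = right y ∧ right v = right y) y (right y))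
  ax2c : ∀ x : α, (∃ u, wayBelow x u) ↔
    (∀ y, right y = right x → y ≤ x →
      relWayBelow (fun u v => u ≤ v ∧ left u = left y ∧ left v = left y) y (left y))
  ax3a : ∀ (p : α) (S : Set α), S.Nonempty → S ⊆ {z | left z = p} →
    DirectedOn (· ≤ ·) S → ∀ u, IsLUB S u →
      left u = p ∧ ∀ (q : α) (T : Set α), T.Nonempty → T ⊆ {z | left z = q} →
        DirectedOn (· ≤ ·) T → ∀ v, IsLUB T v → right '' T = right '' S →
          right u = right v
  ax3b : ∀ (q : α) (S : Set α), S.Nonempty → S ⊆ {z | right z = q} →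
    DirectedOn (· ≤ ·) S → ∀ u, IsLUB S u →
      right u = q ∧ ∀ (p : α) (T : Set α), T.Nonempty → T ⊆ {z | right z = p} →
        DirectedOn (· ≤ ·) T → ∀ v, IsLUB T v → left '' T = left '' S →
          left u = left v
  ax4 : ∀ x : α, @IsCompact α (scottTop α) ({y | x ≤ y} ∩ {y | IsMax y})


section Aux

variable {α : Type*} [PartialOrder α]

lemma wayBelow_le {a x : α} (h : wayBelow a x) : a ≤ x := by
  obtain ⟨s, hs, hle⟩ := h {x} ⟨x, rfl⟩
    (fun p hp q hq => ⟨x, rfl, by simp_all, by simp_all⟩) x isLUB_singleton le_rfl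
  simp only [mem_singleton_iff] at hs
  exact hs ▸ hle

lemma wayBelow_mono_left {a' a x : α} (h' : a' ≤ a) (h : wayBelow a x) : wayBelow a' x := by
  intro S hS hdir d hlub hxd
  obtain ⟨s, hs, hle⟩ := h S hS hdir d hlub hxd
  exact ⟨s, hs, h'.trans hle⟩

lemma wayBelow_mono_right {a x y : α} (h : wayBelow a x) (h' : x ≤ y) : wayBelow a y := by
  intro S hS hdir d hlub hxd
  exact h S hS hdir d hlub (h'.trans hxd)

/-- Properties of the set of elements way below `x`. -/
lemma below_props (hc : ContinuousPoset α) (x : α) :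
    ({a | wayBelow a x}).Nonempty ∧ DirectedOn (· ≤ ·) {a | wayBelow a x} ∧
      IsLUB {a | wayBelow a x} x := by
  obtain ⟨S, hSsub, hSne, hSdir, hSlub⟩ := hc x
  have hub : x ∈ upperBounds {a | wayBelow a x} := fun a ha => wayBelow_le ha
  have hlub : IsLUB {a | wayBelow a x} x := by
    refine ⟨hub, fun u hu => hSlub.2 fun s hs => hu (hSsub hs)⟩
  refine ⟨⟨hSne.choose, hSsub hSne.choose_spec⟩, ?_, hlub⟩
  intro a ha b hb
  obtain ⟨s, hs, has⟩ := ha S hSne hSdir x hSlub le_rfl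
  obtain ⟨t, ht, hbt⟩ := hb S hSne hSdir x hSlub le_rfl
  obtain ⟨z, hz, hsz, htz⟩ := hSdir s hs t ht
  exact ⟨z, hSsub hz, has.trans hsz, hbt.trans htz⟩

/-- Properties of the set of elements way above `x`. -/
lemma above_props (hb : Bicontinuous α) (x : α) :
    ({y | wayBelow x y}).Nonempty ∧ DirectedOn (· ≥ ·) {y | wayBelow x y} ∧
      IsGLB {y | wayBelow x y} x := by
  obtain ⟨hdir, hglb⟩ := hb.2.2 x
  refine ⟨?_, hdir, hglb⟩
  by_contra hne
  rw [Set.not_nonempty_iff_eq_empty] at hne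
  have htop : ∀ y : α, y ≤ x := by
    intro y
    exact hglb.2 (by rw [hne]; exact fun z hz => absurd hz (Set.notMem_empty z))
  have hxx : wayBelow x x := by
    rw [hb.2.1 x x]
    intro S hS _ i _ _
    exact ⟨hS.choose, hS.choose_spec, htop _⟩
  have hmem : x ∈ ({y | wayBelow x y} : Set α) := hxx
  rw [hne] at hmem
  exact hmem

/-- Interpolation for way-below in a continuous poset. -/
lemma wayBelow_interp (hc : ContinuousPoset α) {x y : α} (h : wayBelow x y) :
    ∃ z, wayBelow x z ∧ wayBelow z y := by
  obtain ⟨hyne, hydir, hylub⟩ := below_props hc y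
  set S : Set α := {a | ∃ b, wayBelow a b ∧ wayBelow b y} with hS
  have hSne : S.Nonempty := by
    obtain ⟨b, hb⟩ := hyne
    obtain ⟨a, ha⟩ := (below_props hc b).1
    exact ⟨a, b, ha, hb⟩
  have hSdir : DirectedOn (· ≤ ·) S := by
    rintro a1 ⟨b1, hab1, hb1⟩ a2 ⟨b2, hab2, hb2⟩
    obtain ⟨b, hb, h1b, h2b⟩ := hydir b1 hb1 b2 hb2
    obtain ⟨hbne, hbdir, hblub⟩ := below_props hc b
    obtain ⟨s1, hs1, has1⟩ := (wayBelow_mono_right hab1 h1b) _ hbne hbdir b hblub le_rfl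
    obtain ⟨s2, hs2, has2⟩ := (wayBelow_mono_right hab2 h2b) _ hbne hbdir b hblub le_rfl
    obtain ⟨s, hs, h1s, h2s⟩ := hbdir s1 hs1 s2 hs2
    exact ⟨s, ⟨b, hs, hb⟩, has1.trans h1s, has2.trans h2s⟩
  have hSlub : IsLUB S y := by
    constructor
    · rintro a ⟨b, hab, hb⟩
      exact (wayBelow_le hab).trans (wayBelow_le hb)
    · intro u hu
      refine hylub.2 fun b hb => ?_
      exact (below_props hc b).2.2.2 fun a ha => hu ⟨b, ha, hb⟩
  obtain ⟨a, ⟨b, hab, hby⟩, hxa⟩ := h S hSne hSdir y hSlub le_rfl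
  exact ⟨b, wayBelow_mono_left hxa hab, hby⟩

end Aux


section Aux2

variable {α : Type*} [PartialOrder α]

lemma IX.le_def {s t : IX α} : s ≤ t ↔ s.1.1 ≤ t.1.1 ∧ t.1.2 ≤ s.1.2 := Iff.rfl

/-- The approximating set of pairs for an interval. -/
lemma pairs_props (hb : Bicontinuous α) {c d : α} (hcd : c ≤ d) :
    ({s : IX α | wayBelow s.1.1 c ∧ wayBelow d s.1.2}).Nonempty ∧
      DirectedOn (· ≤ ·) {s : IX α | wayBelow s.1.1 c ∧ wayBelow d s.1.2} ∧
      IsLUB {s : IX α | wayBelow s.1.1 c ∧ wayBelow d s.1.2} ⟨(c, d), hcd⟩ := by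
  obtain ⟨hcne, hcdir, hclub⟩ := below_props hb.1 c
  obtain ⟨hdne, hddir, hdglb⟩ := above_props hb d
  refine ⟨?_, ?_, ⟨?_, ?_⟩⟩
  · obtain ⟨z, hz⟩ := hcne
    obtain ⟨w, hw⟩ := hdne
    exact ⟨⟨(z, w), (wayBelow_le hz).trans (hcd.trans (wayBelow_le hw))⟩, hz, hw⟩
  · rintro s ⟨hs1, hs2⟩ t ⟨ht1, ht2⟩
    obtain ⟨z, hz, hsz, htz⟩ := hcdir _ hs1 _ ht1
    obtain ⟨w, hw, hsw, htw⟩ := hddir _ hs2 _ ht2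
    exact ⟨⟨(z, w), (wayBelow_le hz).trans (hcd.trans (wayBelow_le hw))⟩, ⟨hz, hw⟩,
      ⟨hsz, hsw⟩, ⟨htz, htw⟩⟩
  · rintro s ⟨hs1, hs2⟩
    exact ⟨wayBelow_le hs1, wayBelow_le hs2⟩
  · rintro ⟨⟨p, q⟩, hpq⟩ hu
    obtain ⟨w0, hw0⟩ := hdne
    obtain ⟨z0, hz0⟩ := hcne
    have h1 : c ≤ p := hclub.2 fun z hz =>
      (hu (show _ ∈ {s : IX α | wayBelow s.1.1 c ∧ wayBelow d s.1.2} from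
        (⟨hz, hw0⟩ : wayBelow ((⟨(z, w0), (wayBelow_le hz).trans
          (hcd.trans (wayBelow_le hw0))⟩ : IX α)).1.1 c ∧ wayBelow d _))).1
    have h2 : q ≤ d := hdglb.2 fun w hw =>
      (hu (show _ ∈ {s : IX α | wayBelow s.1.1 c ∧ wayBelow d s.1.2} from
        (⟨hz0, hw⟩ : wayBelow ((⟨(z0, w), (wayBelow_le hz0).trans
          (hcd.trans (wayBelow_le hw))⟩ : IX α)).1.1 c ∧ wayBelow d _))).2
    exact ⟨h1, h2⟩

lemma isOpen_interval_basic (a b : α) :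
    @IsOpen α (intervalTop α) {x | wayBelow a x ∧ wayBelow x b} :=
  TopologicalSpace.GenerateOpen.basic _ ⟨a, b, rfl⟩

lemma isClosed_Iic_intervalTop (hb : Bicontinuous α) (u : α) :
    @IsClosed α (intervalTop α) (Iic u) := by
  letI : TopologicalSpace α := intervalTop α
  rw [← isOpen_compl_iff, isOpen_iff_forall_mem_open]
  intro x hx
  have hnle : ¬ x ≤ u := hx
  obtain ⟨hxne, -, hxlub⟩ := below_props hb.1 x
  obtain ⟨hyne, -, -⟩ := above_props hb x
  have hz : ∃ z, wayBelow z x ∧ ¬ z ≤ u := by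
    by_contra hcon
    push_neg at hcon
    exact hnle (hxlub.2 fun z hz => hcon z hz)
  obtain ⟨z, hzx, hznle⟩ := hz
  obtain ⟨b, hxb⟩ := hyne
  refine ⟨{y | wayBelow z y ∧ wayBelow y b}, ?_, isOpen_interval_basic z b, hzx, hxb⟩
  rintro y ⟨hzy, -⟩ (hy : y ≤ u)
  exact hznle ((wayBelow_le hzy).trans hy)

lemma isClosed_Ici_intervalTop (hb : Bicontinuous α) (l : α) :
    @IsClosed α (intervalTop α) (Ici l) := by
  letI : TopologicalSpace α := intervalTop α
  rw [← isOpen_compl_iff, isOpen_iff_forall_mem_open]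
  intro x hx
  have hnle : ¬ l ≤ x := hx
  obtain ⟨hxne, -, -⟩ := below_props hb.1 x
  obtain ⟨hyne, -, hyglb⟩ := above_props hb x
  have hw : ∃ w, wayBelow x w ∧ ¬ l ≤ w := by
    by_contra hcon
    push_neg at hcon
    exact hnle (hyglb.2 fun w hw => hcon w hw)
  obtain ⟨w, hxw, hwnle⟩ := hw
  obtain ⟨z, hzx⟩ := hxne
  refine ⟨{y | wayBelow z y ∧ wayBelow y w}, ?_, isOpen_interval_basic z w, hzx, hxw⟩
  rintro y ⟨-, hyw⟩ (hy : l ≤ y)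
  exact hwnle (hy.trans (wayBelow_le hyw))

lemma directedOn_finset_bound {β : Type*} [Preorder β] {S : Set β}
    (hdir : DirectedOn (· ≤ ·) S) {s₀ : β} (hs₀ : s₀ ∈ S) (t : Finset β) :
    (∀ x ∈ t, x ∈ S) → ∃ z ∈ S, s₀ ≤ z ∧ ∀ x ∈ t, x ≤ z := by
  classical
  induction t using Finset.induction_on with
  | empty =>
    exact fun _ => ⟨s₀, hs₀, le_rfl, fun x hx => absurd hx (Finset.notMem_empty x)⟩
  | @insert a s ha ih =>
    intro ht
    obtain ⟨z, hz, hs₀z, hzb⟩ := ih fun x hx => ht x (Finset.mem_insert_of_mem hx)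
    obtain ⟨w, hw, hzw, haw⟩ := hdir z hz a (ht a (Finset.mem_insert_self a s))
    refine ⟨w, hw, hs₀z.trans hzw, fun x hx => ?_⟩
    rcases Finset.mem_insert.1 hx with rfl | hx
    · exact haw
    · exact (hzb x hx).trans hzw

/-- Componentwise suprema/infima in the interval domain. -/
lemma componentwise_lub (h : GloballyHyperbolic α) {S : Set (IX α)} (hne : S.Nonempty)
    (hdir : DirectedOn (· ≤ ·) S) {D : IX α} (hD : IsLUB S D) :
    IsLUB ((fun s : IX α => s.1.1) '' S) D.1.1 ∧
      IsGLB ((fun s : IX α => s.1.2) '' S) D.1.2 := by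
  classical
  letI : TopologicalSpace α := intervalTop α
  obtain ⟨s₀, hs₀⟩ := hne
  have hsD : ∀ s ∈ S, s.1.1 ≤ D.1.1 ∧ D.1.2 ≤ s.1.2 := fun s hs => hD.1 hs
  have hpq : D.1.1 ≤ D.1.2 := D.2
  constructor
  · refine ⟨?_, ?_⟩
    · rintro _ ⟨s, hs, rfl⟩
      exact (hsD s hs).1
    · intro u hu
      have hKc : IsCompact (Icc s₀.1.1 D.1.2) := h.2 _ _
      set Z : S → Set α := fun s => Ici (s : IX α).1.1 ∩ (Iic u ∩ Iic D.1.2) with hZ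
      have hZc : ∀ s : S, IsClosed (Z s) := fun s =>
        (isClosed_Ici_intervalTop h.1 _).inter
          ((isClosed_Iic_intervalTop h.1 u).inter (isClosed_Iic_intervalTop h.1 _))
      have hfin : ∀ t : Finset S, (Icc s₀.1.1 D.1.2 ∩ ⋂ i ∈ t, Z i).Nonempty := by
        intro t
        obtain ⟨z, hz, hs₀z, hbound⟩ := directedOn_finset_bound hdir hs₀
          (t.image Subtype.val)
          (fun x hx => by
            obtain ⟨i, hi, rfl⟩ := Finset.mem_image.1 hx
            exact i.2)
        refine ⟨z.1.1, ⟨hs₀z.1, (hsD z hz).1.trans hpq⟩, ?_⟩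
        simp only [Set.mem_iInter]
        intro i hi
        exact ⟨(hbound i.1 (Finset.mem_image_of_mem _ hi)).1,
          hu ⟨z, hz, rfl⟩, (hsD z hz).1.trans hpq⟩
      obtain ⟨u', hu'K, hu'Z⟩ := hKc.inter_iInter_nonempty Z hZc hfin
      simp only [Set.mem_iInter] at hu'Z
      have hu'q : u' ≤ D.1.2 := hu'K.2
      have hu'u : u' ≤ u := (hu'Z ⟨s₀, hs₀⟩).2.1
      have hub : (⟨(u', D.1.2), hu'q⟩ : IX α) ∈ upperBounds S := by
        intro s hs
        exact ⟨(hu'Z ⟨s, hs⟩).1, (hsD s hs).2⟩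
      exact (hD.2 hub).1.trans hu'u
  · refine ⟨?_, ?_⟩
    · rintro _ ⟨s, hs, rfl⟩
      exact (hsD s hs).2
    · intro l hl
      have hKc : IsCompact (Icc D.1.1 s₀.1.2) := h.2 _ _
      set Z : S → Set α := fun s => Iic (s : IX α).1.2 ∩ (Ici l ∩ Ici D.1.1) with hZ
      have hZc : ∀ s : S, IsClosed (Z s) := fun s =>
        (isClosed_Iic_intervalTop h.1 _).inter
          ((isClosed_Ici_intervalTop h.1 l).inter (isClosed_Ici_intervalTop h.1 _))
      have hfin : ∀ t : Finset S, (Icc D.1.1 s₀.1.2 ∩ ⋂ i ∈ t, Z i).Nonempty := by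
        intro t
        obtain ⟨z, hz, hs₀z, hbound⟩ := directedOn_finset_bound hdir hs₀
          (t.image Subtype.val)
          (fun x hx => by
            obtain ⟨i, hi, rfl⟩ := Finset.mem_image.1 hx
            exact i.2)
        refine ⟨z.1.2, ⟨hpq.trans (hsD z hz).2, hs₀z.2⟩, ?_⟩
        simp only [Set.mem_iInter]
        intro i hi
        exact ⟨(hbound i.1 (Finset.mem_image_of_mem _ hi)).2,
          hl ⟨z, hz, rfl⟩, hpq.trans (hsD z hz).2⟩
      obtain ⟨v', hv'K, hv'Z⟩ := hKc.inter_iInter_nonempty Z hZc hfin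
      simp only [Set.mem_iInter] at hv'Z
      have hv'p : D.1.1 ≤ v' := hv'K.1
      have hv'l : l ≤ v' := (hv'Z ⟨s₀, hs₀⟩).2.1
      have hub : (⟨(D.1.1, v'), hv'p⟩ : IX α) ∈ upperBounds S := by
        intro s hs
        exact ⟨(hsD s hs).1, (hv'Z ⟨s, hs⟩).1⟩
      exact hv'l.trans (hD.2 hub).2

/-- If the endpoints are way below/above, the interval is way below. -/
lemma wayBelow_IX (h : GloballyHyperbolic α) {s t : IX α}
    (hac : wayBelow s.1.1 t.1.1) (hdb : wayBelow t.1.2 s.1.2) : wayBelow s t := by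
  intro S hne hdir D hlub hle
  obtain ⟨hL, hR⟩ := componentwise_lub h hne hdir hlub
  have hLne : ((fun s : IX α => s.1.1) '' S).Nonempty := hne.image _
  have hLdir : DirectedOn (· ≤ ·) ((fun s : IX α => s.1.1) '' S) := by
    rintro _ ⟨a, ha, rfl⟩ _ ⟨b, hb, rfl⟩
    obtain ⟨z, hz, haz, hbz⟩ := hdir a ha b hb
    exact ⟨z.1.1, ⟨z, hz, rfl⟩, haz.1, hbz.1⟩
  obtain ⟨_, ⟨s₁, hs₁, rfl⟩, ha1⟩ := hac _ hLne hLdir D.1.1 hL hle.1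
  have hRdir : DirectedOn (· ≥ ·) ((fun s : IX α => s.1.2) '' S) := by
    rintro _ ⟨a, ha, rfl⟩ _ ⟨b, hb, rfl⟩
    obtain ⟨z, hz, haz, hbz⟩ := hdir a ha b hb
    exact ⟨z.1.2, ⟨z, hz, rfl⟩, haz.2, hbz.2⟩
  have hdb' := (h.1.2.1 t.1.2 s.1.2).mp hdb
  obtain ⟨_, ⟨s₂, hs₂, rfl⟩, hb2⟩ := hdb' _ (hne.image _) hRdir D.1.2 hR hle.2
  obtain ⟨z, hz, h1z, h2z⟩ := hdir s₁ hs₁ s₂ hs₂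
  exact ⟨z, hz, ha1.trans h1z.1, h2z.2.trans hb2⟩

/-- Way-below intervals around a degenerate interval have way-below left endpoint. -/
lemma wayBelow_IX_diag (hb : Bicontinuous α) {s : IX α} {x : α}
    (h : wayBelow s (⟨(x, x), le_rfl⟩ : IX α)) : wayBelow s.1.1 x := by
  obtain ⟨hne, hdir, hlub⟩ := pairs_props hb (le_refl x)
  obtain ⟨t, ht, hst⟩ := h _ hne hdir _ hlub le_rfl
  exact wayBelow_mono_left hst.1 ht.1

/-- Construction of a countable co-basis from a countable basis. -/
lemma cobasis (h : GloballyHyperbolic α) {B : Set α} (hBc : B.Countable)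
    (hB : PosetBasis B) :
    ∃ C : Set α, C.Countable ∧ ∀ x y : α, wayBelow x y → ∃ c ∈ C, wayBelow x c ∧ c ≤ y := by
  classical
  set f : α × α → α := fun p => if hp : ∃ z, wayBelow p.1 z ∧ z ≤ p.2 then hp.choose else p.1
    with hf
  refine ⟨f '' (B ×ˢ B), (hBc.prod hBc).image f, ?_⟩
  intro x y hxy
  obtain ⟨z, hxz, hzy⟩ := wayBelow_interp h.1.1 hxy
  obtain ⟨Tz, hTzsub, hTzne, hTzdir, hTzlub⟩ := hB z
  obtain ⟨a, haT, hxa⟩ := hxz Tz hTzne hTzdir z hTzlub le_rfl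
  obtain ⟨Ty, hTysub, hTyne, hTydir, hTylub⟩ := hB y
  obtain ⟨b, hbT, hzb⟩ := hzy Ty hTyne hTydir y hTylub le_rfl
  have hp : ∃ w, wayBelow a w ∧ w ≤ b := ⟨z, (hTzsub haT).2, hzb⟩
  have hfab : f (a, b) = hp.choose := dif_pos hp
  refine ⟨f (a, b), ⟨(a, b), ⟨(hTzsub haT).1, (hTysub hbT).1⟩, rfl⟩, ?_, ?_⟩
  · rw [hfab]
    exact wayBelow_mono_left hxa hp.choose_spec.1
  · rw [hfab]
    exact hp.choose_spec.2.trans (wayBelow_le (hTysub hbT).2)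

end Aux2

/-- `X` has a countable basis iff `IX` is `ω`-continuous. -/
theorem countable_basis_iff {α : Type*} [PartialOrder α]
    (h : GloballyHyperbolic α) :
    (∃ B : Set α, B.Countable ∧ PosetBasis B) ↔
    (∃ B : Set (IX α), B.Countable ∧ PosetBasis B) := by
  constructor
  · rintro ⟨B, hBc, hB⟩
    obtain ⟨C, hCc, hco⟩ := cobasis h hBc hB
    have hbb := h.1
    refine ⟨{s : IX α | s.1.1 ∈ B ∧ s.1.2 ∈ C}, ?_, ?_⟩
    · exact Set.Countable.mono
        (fun s hs => Set.mem_preimage.mpr (Set.mem_prod.mpr ⟨hs.1, hs.2⟩))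
        ((hBc.prod hCc).preimage Subtype.val_injective)
    · intro D
      obtain ⟨S₀, hS₀sub, hS₀ne, hS₀dir, hS₀lub⟩ := hB D.1.1
      obtain ⟨hane, haddir, hadglb⟩ := above_props hbb D.1.2
      set Cd : Set α := {b | b ∈ C ∧ wayBelow D.1.2 b} with hCdd
      have hCdne : Cd.Nonempty := by
        obtain ⟨w, hw⟩ := hane
        obtain ⟨cc, hcc, hdc, -⟩ := hco D.1.2 w hw
        exact ⟨cc, hcc, hdc⟩
      have hCddir : DirectedOn (· ≥ ·) Cd := by
        rintro b1 ⟨hb1C, hb1⟩ b2 ⟨hb2C, hb2⟩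
        obtain ⟨m, hm, hm1, hm2⟩ := haddir b1 hb1 b2 hb2
        obtain ⟨cc, hcc, hdc, hcm⟩ := hco D.1.2 m hm
        exact ⟨cc, ⟨hcc, hdc⟩, hcm.trans hm1, hcm.trans hm2⟩
      have hCdglb : IsGLB Cd D.1.2 := by
        refine ⟨fun b hb => wayBelow_le hb.2, fun l hl => hadglb.2 fun w hw => ?_⟩
        obtain ⟨cc, hcc, hdc, hcw⟩ := hco D.1.2 w hw
        exact (hl ⟨hcc, hdc⟩).trans hcw
      have hBCdir : DirectedOn (· ≤ ·) (B ∩ {a | wayBelow a D.1.1}) := by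
        rintro a1 ⟨ha1B, ha1⟩ a2 ⟨ha2B, ha2⟩
        obtain ⟨t1, ht1, h1t⟩ := ha1 S₀ hS₀ne hS₀dir _ hS₀lub le_rfl
        obtain ⟨t2, ht2, h2t⟩ := ha2 S₀ hS₀ne hS₀dir _ hS₀lub le_rfl
        obtain ⟨t, ht, ht1t, ht2t⟩ := hS₀dir t1 ht1 t2 ht2
        exact ⟨t, hS₀sub ht, h1t.trans ht1t, h2t.trans ht2t⟩
      obtain ⟨a₀, ha₀⟩ := hS₀ne
      have ha₀B := hS₀sub ha₀
      obtain ⟨b₀, hb₀⟩ := hCdne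
      refine ⟨{s : IX α | (s.1.1 ∈ B ∧ wayBelow s.1.1 D.1.1) ∧
        (s.1.2 ∈ C ∧ wayBelow D.1.2 s.1.2)}, ?_, ?_, ?_, ?_, ?_⟩
      · rintro s ⟨hs1, hs2⟩
        exact ⟨⟨hs1.1, hs2.1⟩, wayBelow_IX h hs1.2 hs2.2⟩
      · exact ⟨⟨(a₀, b₀), (wayBelow_le ha₀B.2).trans (D.2.trans (wayBelow_le hb₀.2))⟩,
          ⟨ha₀B.1, ha₀B.2⟩, ⟨hb₀.1, hb₀.2⟩⟩
      · rintro s ⟨hs1, hs2⟩ t ⟨ht1, ht2⟩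
        obtain ⟨a, haBC, hsa, hta⟩ := hBCdir s.1.1 hs1 t.1.1 ht1
        obtain ⟨b, hbCd, hsb, htb⟩ := hCddir s.1.2 hs2 t.1.2 ht2
        exact ⟨⟨(a, b), (wayBelow_le haBC.2).trans (D.2.trans (wayBelow_le hbCd.2))⟩,
          ⟨⟨haBC.1, haBC.2⟩, ⟨hbCd.1, hbCd.2⟩⟩, ⟨hsa, hsb⟩, ⟨hta, htb⟩⟩
      · rintro s ⟨hs1, hs2⟩
        exact ⟨wayBelow_le hs1.2, wayBelow_le hs2.2⟩
      · intro U hU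
        have h1 : D.1.1 ≤ U.1.1 := by
          refine hS₀lub.2 fun a ha => ?_
          have haB := hS₀sub ha
          exact (hU (show _ ∈ {s : IX α | (s.1.1 ∈ B ∧ wayBelow s.1.1 D.1.1) ∧
            (s.1.2 ∈ C ∧ wayBelow D.1.2 s.1.2)} from
            (⟨⟨haB.1, haB.2⟩, ⟨hb₀.1, hb₀.2⟩⟩ :
              ((((⟨(a, b₀), (wayBelow_le haB.2).trans (D.2.trans (wayBelow_le hb₀.2))⟩ :
                IX α)).1.1 ∈ B ∧ _) ∧ _)))).1
        have h2 : U.1.2 ≤ D.1.2 := by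
          refine hCdglb.2 fun b hb => ?_
          exact (hU (show _ ∈ {s : IX α | (s.1.1 ∈ B ∧ wayBelow s.1.1 D.1.1) ∧
            (s.1.2 ∈ C ∧ wayBelow D.1.2 s.1.2)} from
            (⟨⟨ha₀B.1, ha₀B.2⟩, ⟨hb.1, hb.2⟩⟩ :
              ((((⟨(a₀, b), (wayBelow_le ha₀B.2).trans (D.2.trans (wayBelow_le hb.2))⟩ :
                IX α)).1.1 ∈ B ∧ _) ∧ _)))).2
        exact ⟨h1, h2⟩
  · rintro ⟨B', hB'c, hB'⟩
    refine ⟨(fun s : IX α => s.1.1) '' B', hB'c.image _, ?_⟩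
    intro x
    obtain ⟨T, hTsub, hTne, hTdir, hTlub⟩ := hB' ⟨(x, x), le_rfl⟩
    refine ⟨(fun s : IX α => s.1.1) '' T, ?_, hTne.image _, ?_, ?_⟩
    · rintro _ ⟨t, ht, rfl⟩
      exact ⟨⟨t, (hTsub ht).1, rfl⟩, wayBelow_IX_diag h.1 (hTsub ht).2⟩
    · rintro _ ⟨a, ha, rfl⟩ _ ⟨b, hb, rfl⟩
      obtain ⟨z, hz, haz, hbz⟩ := hTdir a ha b hb
      exact ⟨z.1.1, ⟨z, hz, rfl⟩, haz.1, hbz.1⟩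
    · exact (componentwise_lub h hTne hTdir hTlub).1
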